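/- arXiv:2506.08871 — 2 statements merged into one kernel-verified Lean document; each statement's English description precedes it below -/
import Mathlib

section
/- Under the setup of the two-layer GNN error bound, the intermediate comparison satisfies: with Z̃ := Φ(X; A*, Θ) (true features, ideal graph), ‖Z* - Z̃‖_F ≤ ρ₁ρ₂ · α√N, where Z* = Φ(X*; A*, Θ), ρ₁ = ‖Θ⁽¹⁾‖₂, ρ₂ = ‖Θ⁽²⁾‖₂, and max_i ‖(X* - X)_{i,:}‖₂ ≤ α. -/
open scoped Matrix.Norms.L2Operator

/-- Frobenius norm of a real matrix. -/
noncomputable def frob {n m : ℕ} (A : Matrix (Fin n) (Fin m) ℝ) : ℝ :=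
  Real.sqrt (∑ i, ∑ j, (A i j) ^ 2)

/-- Spectral (ℓ2 operator) norm of a real matrix. -/
noncomputable def specNorm {n m : ℕ} (A : Matrix (Fin n) (Fin m) ℝ) : ℝ := ‖A‖

/-- Euclidean norm of the `i`-th row of a matrix. -/
noncomputable def rowNorm {n m : ℕ} (A : Matrix (Fin n) (Fin m) ℝ) (i : Fin n) : ℝ :=
  Real.sqrt (∑ j, (A i j) ^ 2)

/-- Row-normalized adjacency matrix with self-loops: `D⁻¹ (A + I)`. -/
noncomputable def rowNormalize {n : ℕ} (A : Matrix (Fin n) (Fin n) ℝ) :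
    Matrix (Fin n) (Fin n) ℝ :=
  Matrix.of fun i j =>
    (A i j + if i = j then 1 else 0) / (∑ k, (A i k + if i = k then 1 else 0))

/-- A matrix `U` recovers the labels `y` if each row is a class-representative vector and
distinct classes have distinct representatives. -/
def Recovers {N P C : ℕ} (U : Matrix (Fin N) (Fin P) ℝ) (y : Fin N → Fin C) : Prop :=
  ∃ u : Fin C → (Fin P → ℝ), (∀ i, U i = u (y i)) ∧ Function.Injective u

/-- Two-layer GNN `Φ(X; A, Θ) = σ₂(Â_rw σ₁(Â_rw X Θ¹) Θ²)`. -/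
noncomputable def Phi {N M M₁ M₂ : ℕ} (σ₁ σ₂ : ℝ → ℝ)
    (X : Matrix (Fin N) (Fin M) ℝ) (A : Matrix (Fin N) (Fin N) ℝ)
    (Θ₁ : Matrix (Fin M) (Fin M₁) ℝ) (Θ₂ : Matrix (Fin M₁) (Fin M₂) ℝ) :
    Matrix (Fin N) (Fin M₂) ℝ :=
  ((rowNormalize A * ((rowNormalize A * X * Θ₁).map σ₁)) * Θ₂).map σ₂

/-- Idealized features: row `i` is the mean feature vector of the class of node `i`. -/
noncomputable def classMean {N M C : ℕ} (y : Fin N → Fin C)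
    (X : Matrix (Fin N) (Fin M) ℝ) : Matrix (Fin N) (Fin M) ℝ :=
  Matrix.of fun i k =>
    (∑ j ∈ Finset.univ.filter fun j => y j = y i, X j k) /
      ((Finset.univ.filter fun j => y j = y i).card : ℝ)

/-- Idealized adjacency: zero out all edges between nodes of different classes. -/
def idealAdj {N C : ℕ} (y : Fin N → Fin C) (A : Matrix (Fin N) (Fin N) ℝ) :
    Matrix (Fin N) (Fin N) ℝ :=
  Matrix.of fun i j => if y i = y j then A i j else 0

open Matrix in
noncomputable def erow {n m : ℕ} (A : Matrix (Fin n) (Fin m) ℝ) (i : Fin n) :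
    EuclideanSpace ℝ (Fin m) := (EuclideanSpace.equiv (Fin m) ℝ).symm (A i)

lemma rowNorm_eq_erow {n m : ℕ} (A : Matrix (Fin n) (Fin m) ℝ) (i : Fin n) :
    rowNorm A i = ‖erow A i‖ := by
  rw [EuclideanSpace.norm_eq]
  simp [rowNorm, erow, sq_abs]

lemma rowNorm_mul_le {n p m : ℕ} (P : Matrix (Fin n) (Fin p) ℝ)
    (hP : ∀ i j, 0 ≤ P i j) (hsum : ∀ i, ∑ j, P i j = 1)
    (D : Matrix (Fin p) (Fin m) ℝ) (β : ℝ) (hD : ∀ k, rowNorm D k ≤ β) (i : Fin n) :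
    rowNorm (P * D) i ≤ β := by
  rw [rowNorm_eq_erow]
  have h0 : (P * D) i = ∑ k, P i k • D k := by
    funext j
    rw [Finset.sum_apply]
    simp [Matrix.mul_apply]
  have h1 : erow (P * D) i = ∑ k, P i k • erow D k := by
    unfold erow
    rw [h0, map_sum]
    exact Finset.sum_congr rfl fun k _ => _root_.map_smul (EuclideanSpace.equiv (Fin m) ℝ).symm _ _
  rw [h1]
  calc ‖∑ k, P i k • erow D k‖ ≤ ∑ k, ‖P i k • erow D k‖ := norm_sum_le _ _
    _ = ∑ k, P i k * ‖erow D k‖ := by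
        refine Finset.sum_congr rfl fun k _ => ?_
        rw [norm_smul, Real.norm_eq_abs, abs_of_nonneg (hP i k)]
    _ ≤ ∑ k, P i k * β := by
        refine Finset.sum_le_sum fun k _ => ?_
        exact mul_le_mul_of_nonneg_left (by rw [← rowNorm_eq_erow]; exact hD k) (hP i k)
    _ = β := by rw [← Finset.sum_mul, hsum i, one_mul]

open Matrix in
lemma rowNorm_mul_right_le {n m p : ℕ} (D : Matrix (Fin n) (Fin m) ℝ)
    (Θ : Matrix (Fin m) (Fin p) ℝ) (i : Fin n) :
    rowNorm (D * Θ) i ≤ ‖Θ‖ * rowNorm D i := by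
  rw [rowNorm_eq_erow, rowNorm_eq_erow]
  have h1 : erow (D * Θ) i = (EuclideanSpace.equiv (Fin p) ℝ).symm (Θᵀ *ᵥ (D i)) := by
    ext j
    simp [erow, Matrix.mul_apply, Matrix.mulVec, dotProduct, mul_comm]
  rw [h1]
  calc ‖(EuclideanSpace.equiv (Fin p) ℝ).symm (Θᵀ *ᵥ (D i))‖
      ≤ ‖Θᵀ‖ * ‖erow D i‖ := Matrix.l2_opNorm_mulVec Θᵀ (erow D i)
    _ = ‖Θ‖ * ‖erow D i‖ := by
        rw [← Matrix.conjTranspose_eq_transpose_of_trivial, Matrix.l2_opNorm_conjTranspose]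

lemma rowNorm_map_sub_le {n m : ℕ} (σ : ℝ → ℝ) (hσ : LipschitzWith 1 σ)
    (Y Y' : Matrix (Fin n) (Fin m) ℝ) (i : Fin n) :
    rowNorm (Y.map σ - Y'.map σ) i ≤ rowNorm (Y - Y') i := by
  apply Real.sqrt_le_sqrt
  refine Finset.sum_le_sum fun j _ => ?_
  have h := hσ.dist_le_mul (Y i j) (Y' i j)
  rw [Real.dist_eq, Real.dist_eq, NNReal.coe_one, one_mul] at h
  simp only [Matrix.sub_apply, Matrix.map_apply]
  rw [← sq_abs, ← sq_abs (Y i j - Y' i j)]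
  exact pow_le_pow_left₀ (abs_nonneg _) (by simpa using h) 2

lemma frob_le_of_rowNorm_le {n m : ℕ} (Z : Matrix (Fin n) (Fin m) ℝ) (β : ℝ)
    (hβ : 0 ≤ β) (h : ∀ i, rowNorm Z i ≤ β) : frob Z ≤ β * Real.sqrt n := by
  have key : ∀ i, ∑ j, Z i j ^ 2 ≤ β ^ 2 := by
    intro i
    have h0 : 0 ≤ ∑ j, Z i j ^ 2 := Finset.sum_nonneg fun j _ => sq_nonneg _
    have hh := h i
    rw [rowNorm] at hh
    nlinarith [Real.sq_sqrt h0, Real.sqrt_nonneg (∑ j, Z i j ^ 2)]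
  calc frob Z ≤ Real.sqrt (∑ _i : Fin n, β ^ 2) :=
        Real.sqrt_le_sqrt (Finset.sum_le_sum fun i _ => key i)
    _ = β * Real.sqrt n := by
        rw [Finset.sum_const, Finset.card_univ, Fintype.card_fin, nsmul_eq_mul,
          Real.sqrt_mul (Nat.cast_nonneg n), Real.sqrt_sq hβ, mul_comm]

theorem two_layer_gnn_feature_noise_bound (N M M₁ M₂ C : ℕ) (y : Fin N → Fin C)
    (A : Matrix (Fin N) (Fin N) ℝ) (hA : ∀ i j, 0 ≤ A i j)
    (X : Matrix (Fin N) (Fin M) ℝ)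
    (σ₁ σ₂ : ℝ → ℝ) (hσ₁ : LipschitzWith 1 σ₁) (hσ₂ : LipschitzWith 1 σ₂)
    (Θ₁ : Matrix (Fin M) (Fin M₁) ℝ) (Θ₂ : Matrix (Fin M₁) (Fin M₂) ℝ)
    (α : ℝ) (hα : 0 ≤ α)
    (hrec : Recovers (classMean y X) y)
    (hnoise : ∀ i, rowNorm (classMean y X - X) i ≤ α) :
    frob (Phi σ₁ σ₂ (classMean y X) (idealAdj y A) Θ₁ Θ₂ -
          Phi σ₁ σ₂ X (idealAdj y A) Θ₁ Θ₂)
      ≤ specNorm Θ₁ * specNorm Θ₂ * (α * Real.sqrt N) := by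
  classical
  set P := rowNormalize (idealAdj y A) with hPdef
  have hideal : ∀ i j, 0 ≤ idealAdj y A i j := by
    intro i j
    simp only [idealAdj, Matrix.of_apply]
    split
    · exact hA i j
    · exact le_refl 0
  have hd : ∀ i, (0:ℝ) < ∑ k, (idealAdj y A i k + if i = k then 1 else 0) := by
    intro i
    have h1 : (1:ℝ) ≤ idealAdj y A i i + if i = i then (1:ℝ) else 0 := by
      simp [hideal i i]
    calc (0:ℝ) < 1 := one_pos
      _ ≤ idealAdj y A i i + if i = i then (1:ℝ) else 0 := h1
      _ ≤ ∑ k, (idealAdj y A i k + if i = k then 1 else 0) := by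
          refine Finset.single_le_sum (f := fun k => idealAdj y A i k + if i = k then (1:ℝ) else 0)
            (fun k _ => ?_) (Finset.mem_univ i)
          have := hideal i k
          beta_reduce
          split <;> linarith
  have hP : ∀ i j, 0 ≤ P i j := by
    intro i j
    simp only [hPdef, rowNormalize, Matrix.of_apply]
    apply div_nonneg _ (le_of_lt (hd i))
    have := hideal i j
    split <;> linarith
  have hsum : ∀ i, ∑ j, P i j = 1 := by
    intro i
    simp only [hPdef, rowNormalize, Matrix.of_apply]
    rw [← Finset.sum_div, div_self (ne_of_gt (hd i))]
  have hΘ₁ : (0:ℝ) ≤ ‖Θ₁‖ := norm_nonneg _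
  have hΘ₂ : (0:ℝ) ≤ ‖Θ₂‖ := norm_nonneg _
  set Xs := classMean y X with hXs
  have h1 : ∀ k, rowNorm (P * Xs - P * X) k ≤ α := by
    intro k
    rw [← Matrix.mul_sub]
    exact rowNorm_mul_le P hP hsum _ α hnoise k
  have h2 : ∀ k, rowNorm (P * Xs * Θ₁ - P * X * Θ₁) k ≤ ‖Θ₁‖ * α := by
    intro k
    rw [← Matrix.sub_mul]
    calc rowNorm ((P * Xs - P * X) * Θ₁) k ≤ ‖Θ₁‖ * rowNorm (P * Xs - P * X) k :=
          rowNorm_mul_right_le _ _ k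
      _ ≤ ‖Θ₁‖ * α := mul_le_mul_of_nonneg_left (h1 k) hΘ₁
  have h3 : ∀ k, rowNorm ((P * Xs * Θ₁).map σ₁ - (P * X * Θ₁).map σ₁) k ≤ ‖Θ₁‖ * α :=
    fun k => (rowNorm_map_sub_le σ₁ hσ₁ _ _ k).trans (h2 k)
  have h4 : ∀ k, rowNorm (P * ((P * Xs * Θ₁).map σ₁) - P * ((P * X * Θ₁).map σ₁)) k
      ≤ ‖Θ₁‖ * α := by
    intro k
    rw [← Matrix.mul_sub]
    exact rowNorm_mul_le P hP hsum _ _ h3 k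
  have h5 : ∀ k, rowNorm (P * ((P * Xs * Θ₁).map σ₁) * Θ₂ - P * ((P * X * Θ₁).map σ₁) * Θ₂) k
      ≤ ‖Θ₂‖ * (‖Θ₁‖ * α) := by
    intro k
    rw [← Matrix.sub_mul]
    calc rowNorm ((P * ((P * Xs * Θ₁).map σ₁) - P * ((P * X * Θ₁).map σ₁)) * Θ₂) k
        ≤ ‖Θ₂‖ * rowNorm (P * ((P * Xs * Θ₁).map σ₁) - P * ((P * X * Θ₁).map σ₁)) k :=
          rowNorm_mul_right_le _ _ k
      _ ≤ ‖Θ₂‖ * (‖Θ₁‖ * α) := mul_le_mul_of_nonneg_left (h4 k) hΘ₂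
  have h6 : ∀ k, rowNorm (Phi σ₁ σ₂ Xs (idealAdj y A) Θ₁ Θ₂ -
      Phi σ₁ σ₂ X (idealAdj y A) Θ₁ Θ₂) k ≤ ‖Θ₂‖ * (‖Θ₁‖ * α) := by
    intro k
    unfold Phi
    exact (rowNorm_map_sub_le σ₂ hσ₂ _ _ k).trans (h5 k)
  have hfrob := frob_le_of_rowNorm_le _ (‖Θ₂‖ * (‖Θ₁‖ * α))
    (by positivity) h6
  calc frob (Phi σ₁ σ₂ Xs (idealAdj y A) Θ₁ Θ₂ - Phi σ₁ σ₂ X (idealAdj y A) Θ₁ Θ₂)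
      ≤ ‖Θ₂‖ * (‖Θ₁‖ * α) * Real.sqrt N := hfrob
    _ = specNorm Θ₁ * specNorm Θ₂ * (α * Real.sqrt N) := by
        simp only [specNorm]; ring
end

section
/- Let Â_rw = D^{-1}(A+I) and Â*_rw = (D*)^{-1}(A*+I) be row-normalized adjacencies with self-loops of nonnegative matrices A and A* = A - Δ (with A* + I having positive diagonal). Then ‖Â*_rw - Â_rw‖_F ≤ ‖D - D*‖_F + ‖Δ‖_F ≤ (√N + 1)‖Δ‖_F, where D = diag((A+I)1), D* = diag((A*+I)1), provided all diagonal entries of D are at least 1. -/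
open scoped Matrix.Norms.L2Operator

lemma frob_eq_norm {n m : ℕ} (A : Matrix (Fin n) (Fin m) ℝ) :
    frob A = ‖((WithLp.equiv 2 _).symm (fun p => A p.1 p.2) :
        EuclideanSpace ℝ (Fin n × Fin m))‖ := by
  have h := EuclideanSpace.norm_eq ((WithLp.equiv 2 _).symm (fun p => A p.1 p.2) :
      EuclideanSpace ℝ (Fin n × Fin m))
  rw [h]
  simp [frob, Fintype.sum_prod_type, Real.norm_eq_abs, sq_abs]

lemma frob_add_le {n m : ℕ} (X Y : Matrix (Fin n) (Fin m) ℝ) :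
    frob (X + Y) ≤ frob X + frob Y := by
  rw [frob_eq_norm, frob_eq_norm, frob_eq_norm]
  exact norm_add_le ((WithLp.equiv 2 _).symm (fun p => X p.1 p.2) :
    EuclideanSpace ℝ (Fin n × Fin m)) ((WithLp.equiv 2 _).symm (fun p => Y p.1 p.2))

lemma frob_mono {n m : ℕ} {X Y : Matrix (Fin n) (Fin m) ℝ}
    (h : ∀ i j, |X i j| ≤ |Y i j|) : frob X ≤ frob Y := by
  apply Real.sqrt_le_sqrt
  apply Finset.sum_le_sum; intro i _
  apply Finset.sum_le_sum; intro j _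
  rw [← sq_abs (X i j), ← sq_abs (Y i j)]
  exact pow_le_pow_left₀ (abs_nonneg _) (h i j) 2

lemma scalar_decomp (a c t e e' : ℝ) (he : e ≠ 0) (he' : e' ≠ 0) :
    (a + t) / e' - (a + c + t) / e = ((a + t) / e') * ((e - e') / e) + (-c / e) := by
  field_simp
  ring

theorem rowNormalize_difference_bound (N : ℕ) (A Δ : Matrix (Fin N) (Fin N) ℝ)
    (hA : ∀ i j, 0 ≤ A i j) (hAstar : ∀ i j, 0 ≤ (A - Δ) i j)
    (hD : ∀ i, 1 ≤ ∑ k, (A i k + if i = k then 1 else 0)) :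
    frob (rowNormalize (A - Δ) - rowNormalize A)
        ≤ frob (Matrix.diagonal (fun i => ∑ k, (A i k + if i = k then 1 else 0)) -
            Matrix.diagonal (fun i => ∑ k, ((A - Δ) i k + if i = k then 1 else 0)))
          + frob Δ
    ∧ frob (Matrix.diagonal (fun i => ∑ k, (A i k + if i = k then 1 else 0)) -
            Matrix.diagonal (fun i => ∑ k, ((A - Δ) i k + if i = k then 1 else 0)))
          + frob Δ
        ≤ (Real.sqrt N + 1) * frob Δ := by
  classical
  set d : Fin N → ℝ := fun i => ∑ k, (A i k + if i = k then 1 else 0) with hdset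
  set d' : Fin N → ℝ := fun i => ∑ k, ((A - Δ) i k + if i = k then 1 else 0) with hd'set
  have hterm : ∀ i k, (0:ℝ) ≤ (A - Δ) i k + (if i = k then (1:ℝ) else 0) := by
    intro i k
    have := hAstar i k
    split <;> linarith
  have hd1 : ∀ i, 1 ≤ d i := hD
  have hd'1 : ∀ i, 1 ≤ d' i := by
    intro i
    have h1 : (A - Δ) i i + (if i = i then (1:ℝ) else 0) ≤ d' i :=
      Finset.single_le_sum (f := fun k => (A - Δ) i k + if i = k then (1:ℝ) else 0)
        (fun k _ => hterm i k) (Finset.mem_univ i)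
    have h2 := hAstar i i
    norm_num at h1
    simp only [Matrix.sub_apply] at h2
    linarith
  have hdpos : ∀ i, (0:ℝ) < d i := fun i => lt_of_lt_of_le one_pos (hd1 i)
  have hd'pos : ∀ i, (0:ℝ) < d' i := fun i => lt_of_lt_of_le one_pos (hd'1 i)
  -- the two pieces of the decomposition
  set X : Matrix (Fin N) (Fin N) ℝ :=
    Matrix.of (fun i j => (((A - Δ) i j + if i = j then (1:ℝ) else 0) / d' i) *
      ((d i - d' i) / d i)) with hXset
  set Y : Matrix (Fin N) (Fin N) ℝ := Matrix.of (fun i j => -Δ i j / d i) with hYset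
  have hdecomp : rowNormalize (A - Δ) - rowNormalize A = X + Y := by
    ext i j
    have e1 : (∑ k, (A i k + if i = k then (1:ℝ) else 0)) = d i := rfl
    have e2 : (∑ k, ((A - Δ) i k + if i = k then (1:ℝ) else 0)) = d' i := rfl
    rw [Matrix.sub_apply, Matrix.add_apply]
    simp only [rowNormalize, Matrix.of_apply, hXset, hYset]
    rw [e1, e2]
    have hb : A i j = (A - Δ) i j + Δ i j := by simp
    rw [hb]
    exact scalar_decomp ((A - Δ) i j) (Δ i j) _ (d i) (d' i)
      (ne_of_gt (hdpos i)) (ne_of_gt (hd'pos i))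
  have hfrobΔ : (0:ℝ) ≤ frob Δ := Real.sqrt_nonneg _
  -- frob Y ≤ frob Δ
  have hY_le : frob Y ≤ frob Δ := by
    apply frob_mono
    intro i j
    simp only [hYset, Matrix.of_apply]
    rw [abs_div, abs_neg]
    have h1 : (1:ℝ) ≤ |d i| := by rw [abs_of_pos (hdpos i)]; exact hd1 i
    exact div_le_self (abs_nonneg _) h1
  -- frob of the diagonal difference
  have hdiag : frob (Matrix.diagonal d - Matrix.diagonal d')
      = Real.sqrt (∑ i, (d i - d' i) ^ 2) := by
    unfold frob
    congr 1
    apply Finset.sum_congr rfl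
    intro i _
    have hpt : ∀ j, ((Matrix.diagonal d - Matrix.diagonal d') i j) ^ 2
        = if i = j then (d i - d' i) ^ 2 else 0 := by
      intro j
      by_cases h : i = j
      · subst h; simp [Matrix.sub_apply, Matrix.diagonal_apply_eq]
      · simp [Matrix.sub_apply, Matrix.diagonal_apply_ne _ h, h]
    rw [Finset.sum_congr rfl (fun j _ => hpt j), Finset.sum_ite_eq]
    simp
  -- frob X ≤ frob of the diagonal difference
  have hX_le : frob X ≤ frob (Matrix.diagonal d - Matrix.diagonal d') := by
    rw [hdiag]
    apply Real.sqrt_le_sqrt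
    apply Finset.sum_le_sum
    intro i _
    have hrow1 : (∑ j, (((A - Δ) i j + if i = j then (1:ℝ) else 0) / d' i)) = 1 := by
      rw [← Finset.sum_div]
      exact div_self (ne_of_gt (hd'pos i))
    have hrow : (∑ j, (((A - Δ) i j + if i = j then (1:ℝ) else 0) / d' i) ^ 2) ≤ 1 := by
      calc (∑ j, (((A - Δ) i j + if i = j then (1:ℝ) else 0) / d' i) ^ 2)
          ≤ (∑ j, (((A - Δ) i j + if i = j then (1:ℝ) else 0) / d' i)) ^ 2 :=
            Finset.sum_sq_le_sq_sum_of_nonneg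
              (fun j _ => div_nonneg (hterm i j) (le_of_lt (hd'pos i)))
        _ = 1 := by rw [hrow1]; norm_num
    have hc : ((d i - d' i) / d i) ^ 2 ≤ (d i - d' i) ^ 2 := by
      rw [div_pow]
      have hd2 : (1:ℝ) ≤ (d i) ^ 2 := by nlinarith [hd1 i]
      exact div_le_self (sq_nonneg _) hd2
    calc (∑ j, (X i j) ^ 2)
        = (∑ j, (((A - Δ) i j + if i = j then (1:ℝ) else 0) / d' i) ^ 2)
            * ((d i - d' i) / d i) ^ 2 := by
          rw [Finset.sum_mul]
          apply Finset.sum_congr rfl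
          intro j _
          simp only [hXset, Matrix.of_apply]
          ring
      _ ≤ 1 * (d i - d' i) ^ 2 := by
          apply mul_le_mul hrow hc (sq_nonneg _) one_pos.le
      _ = (d i - d' i) ^ 2 := one_mul _
  -- first inequality
  have part1 : frob (rowNormalize (A - Δ) - rowNormalize A)
      ≤ frob (Matrix.diagonal d - Matrix.diagonal d') + frob Δ := by
    rw [hdecomp]
    calc frob (X + Y) ≤ frob X + frob Y := frob_add_le X Y
      _ ≤ frob (Matrix.diagonal d - Matrix.diagonal d') + frob Δ :=
          add_le_add hX_le hY_le
  -- second inequality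
  have hdd : ∀ i, d i - d' i = ∑ k, Δ i k := by
    intro i
    show (∑ k, (A i k + if i = k then (1:ℝ) else 0))
        - (∑ k, ((A - Δ) i k + if i = k then (1:ℝ) else 0)) = ∑ k, Δ i k
    rw [← Finset.sum_sub_distrib]
    apply Finset.sum_congr rfl
    intro k _
    simp [Matrix.sub_apply]
  have hcs : (∑ i, (d i - d' i) ^ 2) ≤ (N : ℝ) * ∑ i, ∑ k, (Δ i k) ^ 2 := by
    rw [Finset.mul_sum]
    apply Finset.sum_le_sum
    intro i _
    rw [hdd i]
    have h := sq_sum_le_card_mul_sum_sq (s := (Finset.univ : Finset (Fin N)))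
      (f := fun k => Δ i k)
    simpa using h
  have part2 : frob (Matrix.diagonal d - Matrix.diagonal d') + frob Δ
      ≤ (Real.sqrt N + 1) * frob Δ := by
    have h1 : frob (Matrix.diagonal d - Matrix.diagonal d')
        ≤ Real.sqrt N * frob Δ := by
      rw [hdiag]
      calc Real.sqrt (∑ i, (d i - d' i) ^ 2)
          ≤ Real.sqrt ((N : ℝ) * ∑ i, ∑ k, (Δ i k) ^ 2) := Real.sqrt_le_sqrt hcs
        _ = Real.sqrt N * frob Δ := by
            rw [Real.sqrt_mul (Nat.cast_nonneg N)]
            rfl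
    linarith [hfrobΔ]
  exact ⟨part1, part2⟩
end
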